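/- Define φ : ℝ → ℝ by φ(x) = -x/2 for x < 0, φ(x) = 1 for x ≥ 1, and on [0,1) the piecewise linear interpolation through (0,0) and the points (x_i^1, φ_i^1), (x_i^2, φ_i^2) for i ≥ 0, where x_i^1 = 1 - 7·2^{-i-3}, φ_i^1 = 1 - 9·2^{-2i-3}, x_i^2 = 1 - 5·2^{-i-3}, φ_i^2 = 1 - 3·2^{-2i-4}. Then x_i^1 < x_i^2 < x_{i+1}^1 for all i ≥ 0, and φ is well-defined, continuous, and globally Lipschitz. -/

import Mathlib

open Filter Set Topology

noncomputable def xA (i : ℕ) : ℝ := 1 - 7 / 2 ^ (i + 3)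
noncomputable def xB (i : ℕ) : ℝ := 1 - 5 / 2 ^ (i + 3)
noncomputable def pA (i : ℕ) : ℝ := 1 - 9 / 2 ^ (2 * i + 3)
noncomputable def pB (i : ℕ) : ℝ := 1 - 3 / 2 ^ (2 * i + 4)

/-- `φ` is the piecewise linear function of Example 2.1: `φ(x) = -x/2` for `x < 0`,
`φ(x) = 1` for `x ≥ 1`, and on `[0,1)` the piecewise linear interpolation through
`(0,0)` and the nodes `(xA i, pA i)`, `(xB i, pB i)`. -/
def IsPhi (φ : ℝ → ℝ) : Prop :=
  (∀ x < (0:ℝ), φ x = -x / 2) ∧ (∀ x ≥ (1:ℝ), φ x = 1) ∧ φ 0 = 0 ∧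
  (∀ i, φ (xA i) = pA i) ∧ (∀ i, φ (xB i) = pB i) ∧
  (∀ x ∈ Set.Icc (0:ℝ) (xA 0), φ x = x * pA 0 / xA 0) ∧
  (∀ i, ∀ x ∈ Set.Icc (xA i) (xB i),
      φ x = pA i + (x - xA i) * (pB i - pA i) / (xB i - xA i)) ∧
  (∀ i, ∀ x ∈ Set.Icc (xB i) (xA (i + 1)),
      φ x = pB i + (x - xB i) * (pA (i + 1) - pB i) / (xA (i + 1) - xB i))

namespace PhiAux

lemma tpp (n : ℕ) : (0:ℝ) < 2 ^ n := by positivity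

lemma xA_lt_xB (i : ℕ) : xA i < xB i := by
  unfold xA xB
  have h := tpp (i + 3)
  rw [sub_lt_sub_iff_left, div_lt_div_iff₀ h h]
  nlinarith

lemma e3 (i : ℕ) : (2:ℝ) ^ (i + 3) = 2 ^ i * 8 := by rw [pow_add]; norm_num
lemma e4 (i : ℕ) : (2:ℝ) ^ (i + 4) = 2 ^ i * 16 := by rw [pow_add]; norm_num
lemma f3 (i : ℕ) : (2:ℝ) ^ (2 * i + 3) = 2 ^ i * 2 ^ i * 8 := by
  rw [pow_add, two_mul, pow_add]; norm_num
lemma f4 (i : ℕ) : (2:ℝ) ^ (2 * i + 4) = 2 ^ i * 2 ^ i * 16 := by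
  rw [pow_add, two_mul, pow_add]; norm_num
lemma f5 (i : ℕ) : (2:ℝ) ^ (2 * i + 5) = 2 ^ i * 2 ^ i * 32 := by
  rw [pow_add, two_mul, pow_add]; norm_num

lemma xB_lt_xA (i : ℕ) : xB i < xA (i + 1) := by
  have h := tpp i
  unfold xA xB
  rw [show (i + 1 + 3 : ℕ) = i + 4 from by ring, e3 i, e4 i]
  rw [sub_lt_sub_iff_left, div_lt_div_iff₀ (by positivity) (by positivity)]
  nlinarith

lemma xA_mono : StrictMono xA :=
  strictMono_nat_of_lt_succ fun i => (xA_lt_xB i).trans (xB_lt_xA i)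

lemma xA_lt_one (i : ℕ) : xA i < 1 := by
  unfold xA
  have h := tpp (i + 3)
  have : (0:ℝ) < 7 / 2 ^ (i+3) := by positivity
  linarith

lemma xA0 : xA 0 = 1 / 8 := by norm_num [xA]
lemma pA0 : pA 0 = -(1 / 8) := by norm_num [pA]

lemma xA0_pos : (0:ℝ) < xA 0 := by rw [xA0]; norm_num

lemma xA_pos (i : ℕ) : (0:ℝ) < xA i := xA0_pos.trans_le (xA_mono.monotone (Nat.zero_le i))

lemma xB_lt_one (i : ℕ) : xB i < 1 := (xB_lt_xA i).trans (xA_lt_one _)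

lemma e2 (i : ℕ) : (2:ℝ) ^ (i + 2) = 2 ^ i * 4 := by rw [pow_add]; norm_num
lemma e1 (i : ℕ) : (2:ℝ) ^ (i + 1) = 2 ^ i * 2 := by rw [pow_add]; norm_num

lemma slope1 (i : ℕ) : (pB i - pA i) / (xB i - xA i) = 15 / 2 ^ (i + 2) := by
  have h : (2:ℝ) ^ i ≠ 0 := (tpp i).ne'
  rw [div_eq_iff (sub_pos.2 (xA_lt_xB i)).ne']
  unfold xA xB pA pB
  rw [f3 i, f4 i, e3 i, e2 i]
  generalize ht : (2:ℝ) ^ i = t at *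
  field_simp
  ring

lemma slope2 (i : ℕ) : (pA (i+1) - pB i) / (xA (i+1) - xB i) = -(1 / 2 ^ (i + 1)) := by
  have h : (2:ℝ) ^ i ≠ 0 := (tpp i).ne'
  rw [div_eq_iff (sub_pos.2 (xB_lt_xA i)).ne']
  unfold xA xB pA pB
  rw [show (2 * (i+1) + 3 : ℕ) = 2 * i + 5 from by ring,
    show (i + 1 + 3 : ℕ) = i + 4 from by ring, f4 i, f5 i, e3 i, e4 i, e1 i]
  generalize ht : (2:ℝ) ^ i = t at *
  field_simp
  ring

lemma node_eq1 (i : ℕ) : pA i + (xB i - xA i) * (15 / 2 ^ (i + 2)) = pB i := by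
  have h : (2:ℝ) ^ i ≠ 0 := (tpp i).ne'
  unfold xA xB pA pB
  rw [f3 i, f4 i, e3 i, e2 i]
  generalize ht : (2:ℝ) ^ i = t at *
  field_simp
  ring

lemma node_eq2 (i : ℕ) : pB i - (xA (i+1) - xB i) / 2 ^ (i + 1) = pA (i+1) := by
  have h : (2:ℝ) ^ i ≠ 0 := (tpp i).ne'
  unfold xA xB pA pB
  rw [show (2 * (i+1) + 3 : ℕ) = 2 * i + 5 from by ring,
    show (i + 1 + 3 : ℕ) = i + 4 from by ring, f4 i, f5 i, e3 i, e4 i, e1 i]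
  generalize ht : (2:ℝ) ^ i = t at *
  field_simp
  ring

lemma exists_lt_xA {x : ℝ} (hx : x < 1) : ∃ i, x < xA (i + 1) := by
  obtain ⟨m, hm⟩ := pow_unbounded_of_one_lt (R := ℝ) (7 / (1 - x)) one_lt_two
  refine ⟨m, ?_⟩
  unfold xA
  have h1 : (0:ℝ) < 1 - x := by linarith
  have h2 : (7:ℝ) / (1 - x) < 2 ^ (m + 1 + 3) := by
    calc (7:ℝ) / (1 - x) < 2 ^ m := hm
    _ ≤ 2 ^ (m + 1 + 3) := by
        apply pow_le_pow_right₀ (by norm_num); omega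
  rw [div_lt_iff₀ h1] at h2
  have h3 : 7 / (2:ℝ) ^ (m + 1 + 3) < 1 - x := by
    rw [div_lt_iff₀ (tpp _)]
    nlinarith [tpp (m + 1 + 3)]
  linarith

noncomputable def phi (x : ℝ) : ℝ :=
  if x < 0 then -x / 2
  else if hx : x < 1 then
    if x ≤ xA 0 then -x
    else
      let i := Nat.find (exists_lt_xA hx)
      if x ≤ xB i then pA i + (x - xA i) * (15 / 2 ^ (i + 2))
      else pB i - (x - xB i) / 2 ^ (i + 1)
  else 1

lemma phi_neg {x : ℝ} (h : x < 0) : phi x = -x / 2 := by simp [phi, h]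

lemma phi_ge_one {x : ℝ} (h : 1 ≤ x) : phi x = 1 := by
  have h0 : ¬ x < 0 := by linarith
  have h1 : ¬ x < 1 := not_lt.2 h
  simp [phi, h0, h1]

lemma phi_first {x : ℝ} (h0 : 0 ≤ x) (h1 : x ≤ xA 0) : phi x = -x := by
  have hx0 : ¬ x < 0 := not_lt.2 h0
  have hx1 : x < 1 := lt_of_le_of_lt h1 (xA_lt_one 0)
  simp [phi, hx0, hx1, h1]

lemma find_eq {x : ℝ} (hx : x < 1) {i : ℕ} (h1 : xA i ≤ x) (h2 : x < xA (i + 1)) :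
    Nat.find (exists_lt_xA hx) = i := by
  rw [Nat.find_eq_iff]
  refine ⟨h2, fun m hm => ?_⟩
  push_neg
  exact le_trans (xA_mono.monotone (by omega)) h1

lemma phi_cell1 {i : ℕ} {x : ℝ} (h1 : xA i ≤ x) (h2 : x ≤ xB i) :
    phi x = pA i + (x - xA i) * (15 / 2 ^ (i + 2)) := by
  have hx1 : x < 1 := lt_of_le_of_lt h2 (xB_lt_one i)
  have hx0 : ¬ x < 0 := not_lt.2 ((xA_pos i).le.trans h1)
  rcases le_or_gt x (xA 0) with h | h
  · have hi0 : i = 0 := by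
      by_contra hne
      have : xA 0 < xA i := xA_mono (Nat.pos_of_ne_zero hne)
      linarith
    subst hi0
    have hxeq : x = xA 0 := le_antisymm h h1
    rw [phi_first ((xA_pos 0).le.trans h1) h, hxeq, xA0, pA0]
    norm_num
  · have hfind : Nat.find (exists_lt_xA hx1) = i :=
      find_eq hx1 h1 (lt_of_le_of_lt h2 (xB_lt_xA i))
    simp only [phi, hx0, if_false, hx1, dif_pos, not_le.2 h, if_false, if_neg (not_le.2 h)]
    rw [hfind] -- may need care
    rw [if_pos h2]

lemma phi_cell2 {i : ℕ} {x : ℝ} (h1 : xB i ≤ x) (h2 : x ≤ xA (i + 1)) :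
    phi x = pB i - (x - xB i) / 2 ^ (i + 1) := by
  have hx1 : x < 1 := lt_of_le_of_lt h2 (xA_lt_one _)
  have hx0 : ¬ x < 0 := not_lt.2 (((xA_pos i).trans (xA_lt_xB i)).le.trans h1)
  have hgt : ¬ x ≤ xA 0 := by
    push_neg
    calc xA 0 ≤ xA i := xA_mono.monotone (Nat.zero_le i)
    _ < xB i := xA_lt_xB i
    _ ≤ x := h1
  rcases lt_or_eq_of_le h2 with h2' | h2'
  · have hfind : Nat.find (exists_lt_xA hx1) = i :=
      find_eq hx1 ((xA_lt_xB i).le.trans h1) h2'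
    rcases eq_or_lt_of_le h1 with h1' | h1'
    · simp only [phi, hx0, if_false, hx1, dif_pos, if_neg hgt]
      rw [hfind, if_pos (le_of_eq h1'.symm), ← h1']
      simp only [sub_self, zero_div, sub_zero]
      exact node_eq1 i
    · simp only [phi, hx0, if_false, hx1, dif_pos, if_neg hgt]
      rw [hfind, if_neg (not_le.2 h1')]
  · -- x = xA (i+1)
    have hfind : Nat.find (exists_lt_xA hx1) = i + 1 :=
      find_eq hx1 h2'.ge (h2'.le.trans_lt (xA_mono (Nat.lt_succ_self _)))
    simp only [phi, hx0, if_false, hx1, dif_pos, if_neg hgt]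
    rw [hfind, if_pos (h2'.le.trans (xA_lt_xB (i+1)).le)]
    rw [h2', sub_self, zero_mul, add_zero]
    exact (node_eq2 i).symm

lemma phi_isPhi : IsPhi phi := by
  refine ⟨fun x hx => phi_neg hx, fun x hx => phi_ge_one hx, ?_, ?_, ?_, ?_, ?_, ?_⟩
  · rw [phi_first le_rfl (xA0_pos.le)]; norm_num
  · intro i
    rw [phi_cell1 le_rfl (xA_lt_xB i).le, sub_self, zero_mul, add_zero]
  · intro i
    rw [phi_cell2 le_rfl (xB_lt_xA i).le, sub_self, zero_div, sub_zero]
  · intro x hx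
    rw [phi_first hx.1 hx.2, xA0, pA0]
    field_simp
  · intro i x hx
    rw [phi_cell1 hx.1 hx.2, mul_div_assoc, slope1 i]
  · intro i x hx
    rw [phi_cell2 hx.1 hx.2, mul_div_assoc, slope2 i]
    ring

lemma one_le_tp (n : ℕ) : (1:ℝ) ≤ 2 ^ n := one_le_pow₀ (by norm_num)

lemma lip_cell1 (i : ℕ) {x y : ℝ} (hx : x ∈ Icc (xA i) (xB i)) (hy : y ∈ Icc (xA i) (xB i)) :
    |phi x - phi y| ≤ 4 * |x - y| := by
  rw [phi_cell1 hx.1 hx.2, phi_cell1 hy.1 hy.2]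
  have : pA i + (x - xA i) * (15 / 2 ^ (i + 2)) - (pA i + (y - xA i) * (15 / 2 ^ (i + 2)))
      = (x - y) * (15 / 2 ^ (i + 2)) := by ring
  rw [this, abs_mul, mul_comm]
  have h15 : (15:ℝ) / 2 ^ (i + 2) ≤ 4 := by
    rw [div_le_iff₀ (tpp _), e2 i]
    nlinarith [one_le_tp i]
  have := abs_nonneg (x - y)
  have habs : |(15:ℝ) / 2 ^ (i + 2)| = 15 / 2 ^ (i + 2) := abs_of_pos (by positivity)
  rw [habs]
  nlinarith

lemma lip_cell2 (i : ℕ) {x y : ℝ} (hx : x ∈ Icc (xB i) (xA (i+1))) (hy : y ∈ Icc (xB i) (xA (i+1))) :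
    |phi x - phi y| ≤ 4 * |x - y| := by
  rw [phi_cell2 hx.1 hx.2, phi_cell2 hy.1 hy.2]
  have : pB i - (x - xB i) / 2 ^ (i + 1) - (pB i - (y - xB i) / 2 ^ (i + 1))
      = (y - x) * (1 / 2 ^ (i + 1)) := by ring
  rw [this, abs_mul, abs_sub_comm y x, mul_comm]
  have h1 : |(1:ℝ) / 2 ^ (i + 1)| = 1 / 2 ^ (i + 1) := abs_of_pos (by positivity)
  rw [h1]
  have h2 : (1:ℝ) / 2 ^ (i + 1) ≤ 4 := by
    rw [div_le_iff₀ (tpp _)]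
    nlinarith [one_le_tp (i+1)]
  have := abs_nonneg (x - y)
  nlinarith

lemma lip_first {x y : ℝ} (hx : x ∈ Icc 0 (xA 0)) (hy : y ∈ Icc 0 (xA 0)) :
    |phi x - phi y| ≤ 4 * |x - y| := by
  rw [phi_first hx.1 hx.2, phi_first hy.1 hy.2, show -x - -y = -(x - y) from by ring, abs_neg]
  nlinarith [abs_nonneg (x - y)]

lemma glue {a b c : ℝ} (hab : a ≤ b) (hbc : b ≤ c)
    (h1 : ∀ x ∈ Icc a b, ∀ y ∈ Icc a b, |phi x - phi y| ≤ 4 * |x - y|)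
    (h2 : ∀ x ∈ Icc b c, ∀ y ∈ Icc b c, |phi x - phi y| ≤ 4 * |x - y|) :
    ∀ x ∈ Icc a c, ∀ y ∈ Icc a c, |phi x - phi y| ≤ 4 * |x - y| := by
  have key : ∀ x ∈ Icc a c, ∀ y ∈ Icc a c, x ≤ y → |phi x - phi y| ≤ 4 * |x - y| := by
    intro x hx y hy hxy
    rcases le_or_gt y b with h | h
    · exact h1 x ⟨hx.1, h.trans' hxy⟩ y ⟨hy.1, h⟩  -- need x ≤ b
    · rcases le_or_gt b x with h' | h'
      · exact h2 x ⟨h', hx.2⟩ y ⟨h'.trans hxy, hy.2⟩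
      · have e1 := h1 x ⟨hx.1, h'.le⟩ b ⟨hab, le_rfl⟩
        have e2 := h2 b ⟨le_rfl, hbc⟩ y ⟨h.le, hy.2⟩
        have t := abs_sub_le (phi x) (phi b) (phi y)
        have a1 : |x - b| = b - x := by rw [abs_sub_comm]; exact abs_of_nonneg (by linarith)
        have a2 : |b - y| = y - b := by rw [abs_sub_comm]; exact abs_of_nonneg (by linarith)
        have a3 : |x - y| = y - x := by rw [abs_sub_comm]; exact abs_of_nonneg (by linarith)
        rw [a1] at e1; rw [a2] at e2; rw [a3]
        linarith
  intro x hx y hy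
  rcases le_total x y with hxy | hxy
  · exact key x hx y hy hxy
  · rw [abs_sub_comm (phi x), abs_sub_comm x]
    exact key y hy x hx hxy

lemma lip_upto : ∀ n : ℕ, ∀ x ∈ Icc 0 (xA n), ∀ y ∈ Icc 0 (xA n), |phi x - phi y| ≤ 4 * |x - y| := by
  intro n
  induction n with
  | zero => exact fun x hx y hy => lip_first hx hy
  | succ n ih =>
      have g1 := glue (xA0_pos.le.trans (xA_mono.monotone (Nat.zero_le n))) (xA_lt_xB n).le
        ih (fun x hx y hy => lip_cell1 n hx hy)
      exact glue (xA0_pos.le.trans ((xA_mono.monotone (Nat.zero_le n)).trans (xA_lt_xB n).le))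
        (xB_lt_xA n).le g1 (fun x hx y hy => lip_cell2 n hx hy)

lemma pA_close (n : ℕ) : |pA n - 1| = 9 / 2 ^ (2 * n + 3) := by
  unfold pA
  rw [show (1:ℝ) - 9 / 2 ^ (2 * n + 3) - 1 = -(9 / 2 ^ (2 * n + 3)) from by ring, abs_neg]
  exact abs_of_pos (by positivity)

lemma lip_01 : ∀ x ∈ Icc (0:ℝ) 1, ∀ y ∈ Icc (0:ℝ) 1, |phi x - phi y| ≤ 4 * |x - y| := by
  have key : ∀ x ∈ Icc (0:ℝ) 1, ∀ y ∈ Icc (0:ℝ) 1, x ≤ y → |phi x - phi y| ≤ 4 * |x - y| := by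
    intro x hx y hy hxy
    rcases lt_or_eq_of_le hy.2 with hy1 | hy1
    · -- y < 1 : find n with y ≤ xA n
      obtain ⟨n, hn⟩ := exists_lt_xA hy1
      exact lip_upto (n+1) x ⟨hx.1, (hxy.trans hn.le)⟩ y ⟨hy.1, hn.le⟩
    · -- y = 1
      subst hy1
      rw [phi_ge_one le_rfl]
      rcases lt_or_eq_of_le hx.2 with hx1 | hx1
      · have a3 : |x - (1:ℝ)| = 1 - x := by
          rw [abs_sub_comm]; exact abs_of_nonneg (by linarith)
        rw [a3]
        refine le_of_forall_pos_le_add fun ε hε => ?_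
        obtain ⟨m, hm⟩ := pow_unbounded_of_one_lt (R := ℝ) (9 / ε) one_lt_two
        obtain ⟨k, hk⟩ := exists_lt_xA hx1
        set n := max m (k + 1) with hn
        have hxn : x ≤ xA n := hk.le.trans (xA_mono.monotone (le_max_right _ _))
        have h1 : |phi x - phi (xA n)| ≤ 4 * |x - xA n| :=
          lip_upto n x ⟨hx.1, hxn⟩ (xA n) ⟨(xA_pos n).le, le_rfl⟩
        have a4 : |x - xA n| = xA n - x := by
          rw [abs_sub_comm]; exact abs_of_nonneg (by linarith)
        rw [a4] at h1
        have hphiA : phi (xA n) = pA n := by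
          rw [phi_cell1 le_rfl (xA_lt_xB n).le, sub_self, zero_mul, add_zero]
        have h2 : |pA n - 1| < ε := by
          rw [pA_close n]
          have hp : (2:ℝ) ^ m ≤ 2 ^ (2 * n + 3) :=
            pow_le_pow_right₀ (by norm_num) (by omega)
          have h9 : (9:ℝ) / ε < 2 ^ (2 * n + 3) := hm.trans_le hp
          rw [div_lt_iff₀ hε] at h9
          rw [div_lt_iff₀ (tpp _)]
          nlinarith [tpp (2 * n + 3)]
        have t := abs_sub_le (phi x) (phi (xA n)) 1
        rw [hphiA] at t h1
        have h5 : xA n < 1 := xA_lt_one n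
        linarith
      · subst hx1; simp [phi_ge_one le_rfl]
  intro x hx y hy
  rcases le_total x y with hxy | hxy
  · exact key x hx y hy hxy
  · rw [abs_sub_comm (phi x), abs_sub_comm x]
    exact key y hy x hx hxy

lemma phi_le_zero {x : ℝ} (h : x ≤ 0) : phi x = -x / 2 := by
  rcases lt_or_eq_of_le h with h' | h'
  · exact phi_neg h'
  · subst h'; rw [phi_first le_rfl xA0_pos.le]; norm_num

lemma lip_global : ∀ x y : ℝ, |phi x - phi y| ≤ 4 * |x - y| := by
  have e0 : phi 0 = 0 := by rw [phi_first le_rfl xA0_pos.le]; norm_num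
  have e1 : phi 1 = 1 := phi_ge_one le_rfl
  have key : ∀ x y : ℝ, x ≤ y → |phi x - phi y| ≤ 4 * |x - y| := by
    intro x y hxy
    have a3 : |x - y| = y - x := by
      rw [abs_sub_comm]; exact abs_of_nonneg (by linarith)
    rw [a3]
    rcases le_or_gt y 0 with hy0 | hy0
    · rw [phi_le_zero (hxy.trans hy0), phi_le_zero hy0,
        show -x / 2 - -y / 2 = (y - x) / 2 from by ring, abs_of_nonneg (by linarith)]
      linarith
    rcases le_or_gt 1 x with hx1 | hx1
    · rw [phi_ge_one hx1, phi_ge_one (hx1.trans hxy), sub_self, abs_zero]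
      linarith
    rcases le_or_gt x 0 with hx0 | hx0
    · -- x ≤ 0 < y
      have b1 : |phi x - phi 0| ≤ 4 * (0 - x) := by
        rw [phi_le_zero hx0, e0, sub_zero, abs_of_nonneg (by linarith : (0:ℝ) ≤ -x / 2)]
        linarith
      rcases le_or_gt y 1 with hy1 | hy1
      · have b2 : |phi 0 - phi y| ≤ 4 * (y - 0) := by
          have := lip_01 0 ⟨le_rfl, zero_le_one⟩ y ⟨hy0.le, hy1⟩
          rw [show |(0:ℝ) - y| = y - 0 from by rw [abs_sub_comm]; exact abs_of_nonneg (by linarith)] at this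
          exact this
        have t := abs_sub_le (phi x) (phi 0) (phi y)
        linarith
      · have b2 : |phi 0 - phi 1| ≤ 4 * (1 - 0) := by
          have := lip_01 0 ⟨le_rfl, zero_le_one⟩ 1 ⟨zero_le_one, le_rfl⟩
          rw [show |(0:ℝ) - 1| = 1 - 0 from by norm_num] at this
          exact this
        rw [phi_ge_one hy1.le]
        have t := abs_sub_le (phi x) (phi 0) 1
        rw [e1] at b2
        linarith
    · -- 0 < x < 1
      rcases le_or_gt y 1 with hy1 | hy1
      · have := lip_01 x ⟨hx0.le, hx1.le⟩ y ⟨(hx0.trans_le hxy).le, hy1⟩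
        rw [a3] at this
        exact this
      · have b1 : |phi x - phi 1| ≤ 4 * (1 - x) := by
          have := lip_01 x ⟨hx0.le, hx1.le⟩ 1 ⟨zero_le_one, le_rfl⟩
          rw [show |x - (1:ℝ)| = 1 - x from by rw [abs_sub_comm]; exact abs_of_nonneg (by linarith)] at this
          exact this
        rw [phi_ge_one hy1.le, ← e1]
        linarith
  intro x y
  rcases le_total x y with hxy | hxy
  · exact key x y hxy
  · rw [abs_sub_comm (phi x), abs_sub_comm x]
    exact key y x hxy

lemma phi_lipschitzWith : LipschitzWith 4 phi := by
  apply LipschitzWith.of_dist_le_mul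
  intro x y
  rw [Real.dist_eq, Real.dist_eq]
  have := lip_global x y
  push_cast
  linarith

end PhiAux

theorem stmt13 :
    (∀ i : ℕ, xA i < xB i ∧ xB i < xA (i + 1)) ∧
    ∃ φ : ℝ → ℝ, IsPhi φ ∧ Continuous φ ∧ ∃ K : NNReal, LipschitzWith K φ := by
  refine ⟨fun i => ⟨PhiAux.xA_lt_xB i, PhiAux.xB_lt_xA i⟩,
    PhiAux.phi, PhiAux.phi_isPhi, PhiAux.phi_lipschitzWith.continuous, 4,
    PhiAux.phi_lipschitzWith⟩
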